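/- Let γ > 1 and consider the 1D compressible Euler equations with conservative state U = (ρ, m, E), pressure p(U) = (γ−1)(E − m²/(2ρ)), sound speed c(U) = √(γ p(U)/ρ), velocity v(U) = m/ρ, flux F(U) = (m, m²/ρ + p(U), v(U)(E + p(U))), and invariant domain G = {U : ρ > 0, p(U) > 0}. Let F̂(A, B) = (F(A) + F(B))/2 − (α/2)(B − A) be the local Lax–Friedrichs flux. Then for all U₁, U₂, U₃ ∈ G, all α ≥ max{|v(U₁)| + c(U₁), |v(U₂)| + c(U₂), |v(U₃)| + c(U₃)}, and all μ ≥ 0 with μ·α ≤ 1, one has U₂ − μ·(F̂(U₂, U₃) − F̂(U₁, U₂)) ∈ G. -/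

import Mathlib

/-- Pressure of a 1D Euler state `U = (ρ, m, E)`: `p = (γ−1)(E − m²/(2ρ))`. -/
noncomputable def eulerPressure (γ : ℝ) (U : ℝ × ℝ × ℝ) : ℝ :=
  (γ - 1) * (U.2.2 - U.2.1 ^ 2 / (2 * U.1))

/-- Velocity of a 1D Euler state: `v = m/ρ`. -/
noncomputable def eulerVelocity (U : ℝ × ℝ × ℝ) : ℝ := U.2.1 / U.1

/-- Sound speed of a 1D Euler state: `c = √(γp/ρ)`. -/
noncomputable def eulerSoundSpeed (γ : ℝ) (U : ℝ × ℝ × ℝ) : ℝ :=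
  Real.sqrt (γ * eulerPressure γ U / U.1)

/-- Flux of the 1D compressible Euler equations:
`F(U) = (m, m²/ρ + p, v(E + p))`. -/
noncomputable def eulerFlux (γ : ℝ) (U : ℝ × ℝ × ℝ) : ℝ × ℝ × ℝ :=
  (U.2.1, U.2.1 ^ 2 / U.1 + eulerPressure γ U,
    eulerVelocity U * (U.2.2 + eulerPressure γ U))

/-- Invariant domain of the Euler equations: positive density and pressure. -/
noncomputable def eulerInvariantDomain (γ : ℝ) : Set (ℝ × ℝ × ℝ) :=
  {U | 0 < U.1 ∧ 0 < eulerPressure γ U}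

/-- Local Lax–Friedrichs numerical flux for the Euler equations:
`F̂(A,B) = (F(A)+F(B))/2 − (α/2)(B−A)`. -/
noncomputable def eulerLLF (γ α : ℝ) (A B : ℝ × ℝ × ℝ) : ℝ × ℝ × ℝ :=
  (1 / 2 : ℝ) • (eulerFlux γ A + eulerFlux γ B) - (α / 2) • (B - A)

/-- Weighted three-point Cauchy–Schwarz inequality in quotient form. -/
lemma euler_cauchy3 (a b c x y z A B C : ℝ) (ha : 0 < a) (hb : 0 < b) (hc : 0 < c)
    (hA : 0 ≤ A) (hB : 0 < B) (hC : 0 ≤ C) :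
    (A*x + B*y + C*z)^2 / (A*a + B*b + C*c) ≤ A*(x^2/a) + B*(y^2/b) + C*(z^2/c) := by
  have hD : 0 < A*a + B*b + C*c := by nlinarith
  have habc : 0 < a*b*c := by positivity
  have key : 0 ≤ (A*x^2*b*c + B*y^2*a*c + C*z^2*a*b) * (A*a + B*b + C*c)
      - (A*x + B*y + C*z)^2 * (a*b*c) := by
    have id1 : (A*x^2*b*c + B*y^2*a*c + C*z^2*a*b) * (A*a + B*b + C*c)
        - (A*x + B*y + C*z)^2 * (a*b*c)
        = A*B*c*(x*b - y*a)^2 + A*C*b*(x*c - z*a)^2 + B*C*a*(y*c - z*b)^2 := by ring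
    rw [id1]
    have t1 : 0 ≤ A*B*c*(x*b - y*a)^2 := by positivity
    have t2 : 0 ≤ A*C*b*(x*c - z*a)^2 := by positivity
    have t3 : 0 ≤ B*C*a*(y*c - z*b)^2 := by positivity
    linarith
  rw [div_le_iff₀ hD]
  have expand : A*(x^2/a) + B*(y^2/b) + C*(z^2/c)
      = (A*x^2*b*c + B*y^2*a*c + C*z^2*a*b)/(a*b*c) := by
    field_simp
  rw [expand, div_mul_eq_mul_div, le_div_iff₀ habc]
  linarith

/-- Generalized Lax–Friedrichs splitting for 1D Euler: `αU − F(U)` has positive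
density and positive internal energy whenever `α − v ≥ c`. -/
lemma euler_split (γ r m E α : ℝ) (hγ : 1 < γ) (hr : 0 < r)
    (he : 0 < E - m^2/(2*r))
    (hc : Real.sqrt (γ * ((γ-1)*(E - m^2/(2*r))) / r) ≤ α - m/r) :
    0 < α*r - m ∧
    0 < (α*E - (m/r)*(E + (γ-1)*(E - m^2/(2*r))))
        - (α*m - (m^2/r + (γ-1)*(E - m^2/(2*r))))^2 / (2*(α*r - m)) := by
  set e := E - m^2/(2*r) with he_def
  set p := (γ-1)*e with hp_def
  have hp : 0 < p := by have : 0 < γ - 1 := by linarith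
                        exact mul_pos this he
  have harg : 0 < γ * p / r := by
    have hγ0 : 0 < γ := by linarith
    positivity
  have hsqrtpos : 0 < Real.sqrt (γ * p / r) := Real.sqrt_pos.mpr harg
  have hv : 0 < α - m/r := lt_of_lt_of_le hsqrtpos hc
  have hsq : γ * p / r ≤ (α - m/r)^2 := by
    have h1 := Real.sq_sqrt harg.le
    nlinarith [Real.sqrt_nonneg (γ * p / r)]
  have key : (γ-1) * p / (2*r) < (α - m/r)^2 := by
    have : (γ-1) * p / (2*r) < γ * p / r := by
      rw [div_lt_div_iff₀ (by linarith) hr]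
      nlinarith [mul_pos hp hr]
    linarith
  have hZ : 0 < α*r - m := by
    have : α*r - m = r * (α - m/r) := by field_simp
    rw [this]; exact mul_pos hr hv
  refine ⟨hZ, ?_⟩
  have hnum : 0 < 2*(α*r - m)*(α*E - (m/r)*(E + p)) - (α*m - (m^2/r + p))^2 := by
    have id1 : 2*(α*r - m)*(α*E - (m/r)*(E + p)) - (α*m - (m^2/r + p))^2
        = 2*r*(α - m/r)^2*e - p^2 := by
      rw [he_def]
      field_simp
      ring
    rw [id1]
    have h2 : 2*r*e * ((γ-1)*p/(2*r)) < 2*r*e * (α - m/r)^2 := by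
      apply mul_lt_mul_of_pos_left key
      positivity
    have h3 : 2*r*e * ((γ-1)*p/(2*r)) = p^2 := by
      field_simp [hp_def]
      ring
    nlinarith
  have hform : (α*E - (m/r)*(E + p)) - (α*m - (m^2/r + p))^2 / (2*(α*r - m))
      = (2*(α*r - m)*(α*E - (m/r)*(E + p)) - (α*m - (m^2/r + p))^2) / (2*(α*r - m)) := by
    field_simp
  rw [hform]
  positivity

/-- Convex-combination assembly: a weighted combination of states with positive
internal energy has positive internal energy. -/
lemma euler_assemble (a b c x y z X Y Z A B : ℝ)
    (ha : 0 < a) (hb : 0 < b) (hc : 0 < c) (hA : 0 ≤ A) (hB : 0 < B)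
    (hX : 0 < X - x^2/(2*a)) (hY : 0 < Y - y^2/(2*b)) (hZ : 0 < Z - z^2/(2*c)) :
    0 < (A*X + B*Y + B*Z) - (A*x + B*y + B*z)^2/(2*(A*a + B*b + B*c)) := by
  have h := euler_cauchy3 (2*a) (2*b) (2*c) x y z A B B
    (by linarith) (by linarith) (by linarith) hA hB hB.le
  have e1 : A*(2*a) + B*(2*b) + B*(2*c) = 2*(A*a + B*b + B*c) := by ring
  rw [e1] at h
  have t1 : 0 ≤ A*X - A*(x^2/(2*a)) := by nlinarith [mul_nonneg hA hX.le]
  have t2 : 0 < B*Y - B*(y^2/(2*b)) := by nlinarith [mul_pos hB hY]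
  have t3 : 0 < B*Z - B*(z^2/(2*c)) := by nlinarith [mul_pos hB hZ]
  linarith

set_option maxHeartbeats 1000000 in
/-- **IDP property of the local Lax–Friedrichs flux for the 1D compressible Euler
equations.** If `U₁, U₂, U₃` have positive density and pressure,
`α ≥ max{|v| + c}` over the three states, and `μα ≤ 1` with `μ ≥ 0`, then
`U₂ − μ(F̂(U₂,U₃) − F̂(U₁,U₂))` has positive density and pressure. -/
theorem euler_llf_flux_idp
    (γ : ℝ) (hγ : 1 < γ) (U₁ U₂ U₃ : ℝ × ℝ × ℝ)
    (h₁ : U₁ ∈ eulerInvariantDomain γ) (h₂ : U₂ ∈ eulerInvariantDomain γ)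
    (h₃ : U₃ ∈ eulerInvariantDomain γ)
    (α : ℝ)
    (hα : α ≥ max (max (|eulerVelocity U₁| + eulerSoundSpeed γ U₁)
        (|eulerVelocity U₂| + eulerSoundSpeed γ U₂))
      (|eulerVelocity U₃| + eulerSoundSpeed γ U₃))
    (μ : ℝ) (hμ : 0 ≤ μ) (hCFL : μ * α ≤ 1) :
    U₂ - μ • (eulerLLF γ α U₂ U₃ - eulerLLF γ α U₁ U₂) ∈ eulerInvariantDomain γ := by
  obtain ⟨r1, m1, E1⟩ := U₁
  obtain ⟨r2, m2, E2⟩ := U₂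
  obtain ⟨r3, m3, E3⟩ := U₃
  simp only [eulerInvariantDomain, Set.mem_setOf_eq, eulerPressure, eulerVelocity,
    eulerSoundSpeed] at h₁ h₂ h₃
  obtain ⟨hr1, hp1⟩ := h₁
  obtain ⟨hr2, hp2⟩ := h₂
  obtain ⟨hr3, hp3⟩ := h₃
  have hγ1 : 0 < γ - 1 := by linarith
  have he1 : 0 < E1 - m1^2/(2*r1) := by
    have := hp1; nlinarith
  have he2 : 0 < E2 - m2^2/(2*r2) := by
    have := hp2; nlinarith
  have he3 : 0 < E3 - m3^2/(2*r3) := by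
    have := hp3; nlinarith
  -- bounds on α from hα
  have hα1 : |m1/r1| + Real.sqrt (γ * ((γ-1)*(E1 - m1^2/(2*r1))) / r1) ≤ α := by
    have h := le_trans (le_max_left _ _) (le_trans (le_max_left _ _) hα)
    simpa [eulerVelocity, eulerSoundSpeed, eulerPressure] using h
  have hα2 : |m2/r2| + Real.sqrt (γ * ((γ-1)*(E2 - m2^2/(2*r2))) / r2) ≤ α := by
    have h := le_trans (le_max_right _ _) (le_trans (le_max_left _ _) hα)
    simpa [eulerVelocity, eulerSoundSpeed, eulerPressure] using h
  have hα3 : |m3/r3| + Real.sqrt (γ * ((γ-1)*(E3 - m3^2/(2*r3))) / r3) ≤ α := by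
    have h := le_trans (le_max_right _ _) hα
    simpa [eulerVelocity, eulerSoundSpeed, eulerPressure] using h
  -- α is positive
  have hαpos : 0 < α := by
    have harg2 : 0 < γ * ((γ-1)*(E2 - m2^2/(2*r2))) / r2 := by
      have hγ0 : 0 < γ := by linarith
      positivity
    have := Real.sqrt_pos.mpr harg2
    have := abs_nonneg (m2/r2)
    linarith
  rcases eq_or_lt_of_le hμ with hμ0 | hμpos
  · -- μ = 0 : the state is unchanged
    subst hμ0
    simp only [zero_smul, sub_zero, eulerInvariantDomain, Set.mem_setOf_eq, eulerPressure]
    exact ⟨hr2, hp2⟩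
  -- split lemma applied to U₃ (minus side)
  have hc3 : Real.sqrt (γ * ((γ-1)*(E3 - m3^2/(2*r3))) / r3) ≤ α - m3/r3 := by
    have := le_abs_self (m3/r3)
    linarith
  obtain ⟨hb3, hE3s⟩ := euler_split γ r3 m3 E3 α hγ hr3 he3 hc3
  -- split lemma applied to U₁ with m ↦ -m (plus side)
  have he1' : 0 < E1 - (-m1)^2/(2*r1) := by rw [neg_pow]; simpa using he1
  have hc1 : Real.sqrt (γ * ((γ-1)*(E1 - (-m1)^2/(2*r1))) / r1) ≤ α - (-m1)/r1 := by
    have h1 : (-m1)^2 = m1^2 := by ring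
    rw [h1]
    have := neg_abs_le (m1/r1)
    have h2 : (-m1)/r1 = -(m1/r1) := by ring
    rw [h2]
    linarith
  obtain ⟨hb1, hE1s⟩ := euler_split γ r1 (-m1) E1 α hγ hr1 he1' hc1
  have hb1' : 0 < α*r1 + m1 := by linarith [hb1]
  have hE1s' : 0 < (α*E1 + (m1/r1)*(E1 + (γ-1)*(E1 - m1^2/(2*r1))))
      - (α*m1 + (m1^2/r1 + (γ-1)*(E1 - m1^2/(2*r1))))^2 / (2*(α*r1 + m1)) := by
    have heq : (α*E1 - ((-m1)/r1)*(E1 + (γ-1)*(E1 - (-m1)^2/(2*r1))))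
        - (α*(-m1) - ((-m1)^2/r1 + (γ-1)*(E1 - (-m1)^2/(2*r1))))^2 / (2*(α*r1 - (-m1)))
        = (α*E1 + (m1/r1)*(E1 + (γ-1)*(E1 - m1^2/(2*r1))))
        - (α*m1 + (m1^2/r1 + (γ-1)*(E1 - m1^2/(2*r1))))^2 / (2*(α*r1 + m1)) := by
      have h1 : (-m1 : ℝ)^2 = m1^2 := by ring
      have h2 : α*r1 - (-m1) = α*r1 + m1 := by ring
      have h3 : (α*(-m1) - (m1^2/r1 + (γ-1)*(E1 - m1^2/(2*r1))))^2
          = (α*m1 + (m1^2/r1 + (γ-1)*(E1 - m1^2/(2*r1))))^2 := by ring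
      rw [h1, h2, h3]
      ring
    rw [heq] at hE1s
    exact hE1s
  -- weights
  have hA : 0 ≤ 1 - μ*α := by linarith
  have hB : 0 < μ/2 := by linarith
  have hfin := euler_assemble r2 (α*r1 + m1) (α*r3 - m3)
      m2 (α*m1 + (m1^2/r1 + (γ-1)*(E1 - m1^2/(2*r1))))
      (α*m3 - (m3^2/r3 + (γ-1)*(E3 - m3^2/(2*r3))))
      E2 (α*E1 + (m1/r1)*(E1 + (γ-1)*(E1 - m1^2/(2*r1))))
      (α*E3 - (m3/r3)*(E3 + (γ-1)*(E3 - m3^2/(2*r3))))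
      (1 - μ*α) (μ/2) hr2 hb1' hb3 hA hB he2 hE1s' hE3s
  have hRpos : 0 < (1 - μ*α)*r2 + (μ/2)*(α*r1 + m1) + (μ/2)*(α*r3 - m3) := by
    linarith [mul_nonneg hA hr2.le, mul_pos hB hb1', mul_pos hB hb3]
  -- identify the components of the updated state
  have hcomp1 : ((r2,m2,E2) - μ • (eulerLLF γ α (r2,m2,E2) (r3,m3,E3)
      - eulerLLF γ α (r1,m1,E1) (r2,m2,E2))).1
      = (1 - μ*α)*r2 + (μ/2)*(α*r1 + m1) + (μ/2)*(α*r3 - m3) := by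
    simp only [eulerLLF, eulerFlux, eulerPressure, eulerVelocity, Prod.smul_mk,
      Prod.mk_sub_mk, Prod.mk_add_mk, smul_eq_mul]
    ring
  have hcomp2 : ((r2,m2,E2) - μ • (eulerLLF γ α (r2,m2,E2) (r3,m3,E3)
      - eulerLLF γ α (r1,m1,E1) (r2,m2,E2))).2.1
      = (1 - μ*α)*m2 + (μ/2)*(α*m1 + (m1^2/r1 + (γ-1)*(E1 - m1^2/(2*r1))))
        + (μ/2)*(α*m3 - (m3^2/r3 + (γ-1)*(E3 - m3^2/(2*r3)))) := by
    simp only [eulerLLF, eulerFlux, eulerPressure, eulerVelocity, Prod.smul_mk,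
      Prod.mk_sub_mk, Prod.mk_add_mk, smul_eq_mul]
    ring
  have hcomp3 : ((r2,m2,E2) - μ • (eulerLLF γ α (r2,m2,E2) (r3,m3,E3)
      - eulerLLF γ α (r1,m1,E1) (r2,m2,E2))).2.2
      = (1 - μ*α)*E2 + (μ/2)*(α*E1 + (m1/r1)*(E1 + (γ-1)*(E1 - m1^2/(2*r1))))
        + (μ/2)*(α*E3 - (m3/r3)*(E3 + (γ-1)*(E3 - m3^2/(2*r3)))) := by
    simp only [eulerLLF, eulerFlux, eulerPressure, eulerVelocity, Prod.smul_mk,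
      Prod.mk_sub_mk, Prod.mk_add_mk, smul_eq_mul]
    ring
  simp only [eulerInvariantDomain, Set.mem_setOf_eq, eulerPressure]
  rw [hcomp1, hcomp2, hcomp3]
  exact ⟨hRpos, mul_pos hγ1 hfin⟩
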